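/- Let k be a field, Q = k[x,y,z,w], a ∈ k, T₁ = yz+a²z²−azw−w², T₂ = yw−aw², T₅ = y²+a²yz−ayw−a³zw, J = (x², xz, xw, T₁, T₂), and q = xy−z². Then J : (z) = (x, T₁, T₂, T₅) = J : (z²) and J : (q) = J + (x). -/

import Mathlib

open MvPolynomial

namespace Stmt10Aux

theorem mem_span2 {R : Type*} [CommRing R] {a b x : R} :
    x ∈ Ideal.span ({a, b} : Set R) ↔ ∃ p q, x = p * a + q * b := by
  rw [Ideal.mem_span_pair]
  exact ⟨fun ⟨p, q, h⟩ => ⟨p, q, h.symm⟩, fun ⟨p, q, h⟩ => ⟨p, q, h.symm⟩⟩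

theorem mem_span3 {R : Type*} [CommRing R] {a b c x : R} :
    x ∈ Ideal.span ({a, b, c} : Set R) ↔ ∃ p q r, x = p * a + q * b + r * c := by
  rw [show ({a, b, c} : Set R) = insert a {b, c} from rfl, Ideal.mem_span_insert]
  constructor
  · rintro ⟨p, zz, hz, rfl⟩
    obtain ⟨q, r, rfl⟩ := mem_span2.mp hz
    exact ⟨p, q, r, by ring⟩
  · rintro ⟨p, q, r, rfl⟩
    exact ⟨p, q * b + r * c, mem_span2.mpr ⟨q, r, rfl⟩, by ring⟩

theorem mem_span4 {R : Type*} [CommRing R] {a b c d x : R} :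
    x ∈ Ideal.span ({a, b, c, d} : Set R) ↔ ∃ p q r s, x = p * a + q * b + r * c + s * d := by
  rw [show ({a, b, c, d} : Set R) = insert a {b, c, d} from rfl, Ideal.mem_span_insert]
  constructor
  · rintro ⟨p, zz, hz, rfl⟩
    obtain ⟨q, r, s, rfl⟩ := mem_span3.mp hz
    exact ⟨p, q, r, s, by ring⟩
  · rintro ⟨p, q, r, s, rfl⟩
    exact ⟨p, q * b + r * c + s * d, mem_span3.mpr ⟨q, r, s, rfl⟩, by ring⟩

theorem mem_span5 {R : Type*} [CommRing R] {a b c d e x : R} :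
    x ∈ Ideal.span ({a, b, c, d, e} : Set R) ↔
      ∃ p q r s t, x = p * a + q * b + r * c + s * d + t * e := by
  rw [show ({a, b, c, d, e} : Set R) = insert a {b, c, d, e} from rfl, Ideal.mem_span_insert]
  constructor
  · rintro ⟨p, zz, hz, rfl⟩
    obtain ⟨q, r, s, t, rfl⟩ := mem_span4.mp hz
    exact ⟨p, q, r, s, t, by ring⟩
  · rintro ⟨p, q, r, s, t, rfl⟩
    exact ⟨p, q * b + r * c + s * d + t * e, mem_span4.mpr ⟨q, r, s, t, rfl⟩, by ring⟩

variable {k : Type*} [Field k]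

noncomputable def kill (i : Fin 4) : MvPolynomial (Fin 4) k →ₐ[k] MvPolynomial (Fin 4) k :=
  aeval (fun j => if j = i then 0 else X j)

@[simp] theorem kill_X_self (i : Fin 4) : kill (k := k) i (X i) = 0 := by simp [kill]

theorem kill_X_ne {i j : Fin 4} (h : j ≠ i) : kill (k := k) i (X j) = X j := by
  simp [kill, h]

@[simp] theorem kill_C (i : Fin 4) (c : k) : kill i (C c) = C c := by
  simp [kill, algebraMap_eq]

theorem exists_kill (i : Fin 4) (f : MvPolynomial (Fin 4) k) :
    ∃ g, f = kill i f + X i * g := by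
  induction f using MvPolynomial.induction_on with
  | C c => exact ⟨0, by simp⟩
  | add p q hp hq =>
    obtain ⟨g, hg⟩ := hp
    obtain ⟨g', hg'⟩ := hq
    exact ⟨g + g', by rw [map_add]; linear_combination hg + hg'⟩
  | mul_X p j hp =>
    obtain ⟨g, hg⟩ := hp
    by_cases hj : j = i
    · subst hj
      exact ⟨p, by rw [map_mul, kill_X_self, mul_zero]; ring⟩
    · exact ⟨g * X j, by rw [map_mul, kill_X_ne hj]; linear_combination (X j) * hg⟩

theorem prime_X_var (i : Fin 4) : Prime (X i : MvPolynomial (Fin 4) k) := by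
  rw [← MulEquiv.prime_iff (renameEquiv k (Equiv.swap (i : Fin 4) 0)).toMulEquiv]
  show Prime ((renameEquiv k (Equiv.swap (i : Fin 4) 0)) (X i))
  rw [renameEquiv_apply, rename_X, Equiv.swap_apply_left]
  rw [← MulEquiv.prime_iff (finSuccEquiv k 3).toMulEquiv]
  show Prime ((finSuccEquiv k 3) (X 0))
  rw [finSuccEquiv_X_zero]
  exact Polynomial.prime_X

noncomputable def shear (a : k) : MvPolynomial (Fin 4) k →ₐ[k] MvPolynomial (Fin 4) k :=
  aeval (fun j => if j = 1 then X 1 - C a * X 3 else X j)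

noncomputable def shear' (a : k) : MvPolynomial (Fin 4) k →ₐ[k] MvPolynomial (Fin 4) k :=
  aeval (fun j => if j = 1 then X 1 + C a * X 3 else X j)

noncomputable def shearEquiv (a : k) :
    MvPolynomial (Fin 4) k ≃ₐ[k] MvPolynomial (Fin 4) k :=
  AlgEquiv.ofAlgHom (shear a) (shear' a)
    (algHom_ext fun i => by fin_cases i <;> simp [shear, shear', aeval_X])
    (algHom_ext fun i => by fin_cases i <;> simp [shear, shear', aeval_X])

theorem prime_u (a : k) : Prime (X 1 - C a * X 3 : MvPolynomial (Fin 4) k) := by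
  have h1 : Prime (X 1 : MvPolynomial (Fin 4) k) := prime_X_var 1
  have := (MulEquiv.prime_iff (shearEquiv a).toMulEquiv (p := (X 1 : MvPolynomial (Fin 4) k))).mpr h1
  have e : (shearEquiv a) (X 1) = X 1 - C a * X 3 := by
    show shear a (X 1) = _
    simp [shear]
  rwa [show ((shearEquiv a).toMulEquiv (X 1)) = (shearEquiv a) (X 1) from rfl, e] at this

theorem u_not_dvd_w (a : k) : ¬ (X 1 - C a * X 3 : MvPolynomial (Fin 4) k) ∣ X 3 := by
  intro ⟨t, ht⟩
  have := congrArg (aeval (fun j => if j = 1 then C a * X 3 else X j :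
    Fin 4 → MvPolynomial (Fin 4) k)) ht
  simp [aeval_X] at this

theorem w_not_dvd_y : ¬ (X 3 : MvPolynomial (Fin 4) k) ∣ X 1 := by
  intro h
  have := (kill (k := k) 3).toRingHom.map_dvd h
  simp only [AlgHom.toRingHom_eq_coe, RingHom.coe_coe] at this
  change kill (k := k) 3 (X 3) ∣ kill 3 (X 1) at this
  rw [kill_X_self, kill_X_ne (by decide)] at this
  exact X_ne_zero (R := k) (σ := Fin 4) 1 (zero_dvd_iff.mp this)


noncomputable def t1 (a : k) : MvPolynomial (Fin 4) k :=
  X 1 * X 2 + C a ^ 2 * X 2 ^ 2 - C a * X 2 * X 3 - X 3 ^ 2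

noncomputable def t2 (a : k) : MvPolynomial (Fin 4) k :=
  X 1 * X 3 - C a * X 3 ^ 2

noncomputable def t5 (a : k) : MvPolynomial (Fin 4) k :=
  X 1 ^ 2 + C a ^ 2 * X 1 * X 2 - C a * X 1 * X 3 - C a ^ 3 * X 2 * X 3

theorem colon_z_core (a : k) (p A B Cc : MvPolynomial (Fin 4) k)
    (h : X 2 * p = A * t1 a + B * t2 a + Cc * t5 a) :
    ∃ A' B' C', p = A' * t1 a + B' * t2 a + C' * t5 a := by
  obtain ⟨A₁, hA⟩ := exists_kill 2 A
  obtain ⟨B₁, hB⟩ := exists_kill 2 B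
  obtain ⟨C₁, hC⟩ := exists_kill 2 Cc
  have h0 := congrArg (kill (k := k) 2) h
  rw [map_mul, kill_X_self, zero_mul] at h0
  simp only [t1, t2, t5, map_add, map_sub, map_mul, map_pow, kill_C, kill_X_self,
    kill_X_ne (show (1 : Fin 4) ≠ 2 by decide), kill_X_ne (show (3 : Fin 4) ≠ 2 by decide)]
    at h0
  have e : kill 2 A * X 3 ^ 2 = (X 1 - C a * X 3) * (kill 2 B * X 3 + kill 2 Cc * X 1) := by
    linear_combination h0
  have hu : Prime (X 1 - C a * X 3 : MvPolynomial (Fin 4) k) := prime_u a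
  have hw : Prime (X 3 : MvPolynomial (Fin 4) k) := prime_X_var 3
  obtain ⟨A2, hA2⟩ : (X 1 - C a * X 3 : MvPolynomial (Fin 4) k) ∣ kill 2 A := by
    rcases (hu.dvd_mul).mp ⟨_, e⟩ with h' | h'
    · exact h'
    · exact absurd (hu.dvd_of_dvd_pow h') (u_not_dvd_w a)
  have e2 : A2 * X 3 ^ 2 = kill 2 B * X 3 + kill 2 Cc * X 1 := by
    apply mul_left_cancel₀ hu.ne_zero
    linear_combination e - X 3 ^ 2 * hA2
  have hdvd2 : (X 3 : MvPolynomial (Fin 4) k) ∣ kill 2 Cc * X 1 :=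
    ⟨A2 * X 3 - kill 2 B, by linear_combination -e2⟩
  obtain ⟨C2, hC2⟩ : (X 3 : MvPolynomial (Fin 4) k) ∣ kill 2 Cc := by
    rcases (hw.dvd_mul).mp hdvd2 with h' | h'
    · exact h'
    · exact absurd h' w_not_dvd_y
  have e3 : kill 2 B = A2 * X 3 - C2 * X 1 := by
    apply mul_left_cancel₀ (X_ne_zero (R := k) (σ := Fin 4) 3)
    linear_combination -e2 - X 1 * hC2
  refine ⟨A₁, B₁ - C a * A2 + C a ^ 2 * C2, C₁ + A2, ?_⟩
  apply mul_left_cancel₀ (X_ne_zero (R := k) (σ := Fin 4) 2)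
  rw [h]
  simp only [t1, t2, t5]
  linear_combination
    (X 1 * X 2 + C a ^ 2 * X 2 ^ 2 - C a * X 2 * X 3 - X 3 ^ 2) * hA
    + (X 1 * X 2 + C a ^ 2 * X 2 ^ 2 - C a * X 2 * X 3 - X 3 ^ 2) * hA2
    + (X 1 * X 3 - C a * X 3 ^ 2) * hB
    + (X 1 * X 3 - C a * X 3 ^ 2) * e3
    + (X 1 ^ 2 + C a ^ 2 * X 1 * X 2 - C a * X 1 * X 3 - C a ^ 3 * X 2 * X 3) * hC
    + (X 1 ^ 2 + C a ^ 2 * X 1 * X 2 - C a * X 1 * X 3 - C a ^ 3 * X 2 * X 3) * hC2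


theorem t1_mem {a : k} :
    t1 a ∈ Ideal.span ({X 0 ^ 2, X 0 * X 2, X 0 * X 3, t1 a, t2 a} :
      Set (MvPolynomial (Fin 4) k)) :=
  Ideal.subset_span (by simp)

theorem t2_mem {a : k} :
    t2 a ∈ Ideal.span ({X 0 ^ 2, X 0 * X 2, X 0 * X 3, t1 a, t2 a} :
      Set (MvPolynomial (Fin 4) k)) :=
  Ideal.subset_span (by simp)

/-- Part 1 : `J : (z) = (x, T₁, T₂, T₅)`. -/
theorem part1 (a : k) :
    (Ideal.span ({X 0 ^ 2, X 0 * X 2, X 0 * X 3, t1 a, t2 a} :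
        Set (MvPolynomial (Fin 4) k))).colon (Ideal.span {X 2} : Ideal (MvPolynomial (Fin 4) k)) =
      Ideal.span {X 0, t1 a, t2 a, t5 a} := by
  ext p
  rw [Ideal.mem_colon_span_singleton]
  constructor
  · intro hm
    obtain ⟨c1, c2, c3, c4, c5, hrep⟩ := mem_span5.mp hm
    obtain ⟨g, hg⟩ := exists_kill 0 p
    have h0 := congrArg (kill (k := k) 0) hrep
    simp only [t1, t2, map_add, map_sub, map_mul, map_pow, kill_X_self, kill_C,
      kill_X_ne (show (1 : Fin 4) ≠ 0 by decide), kill_X_ne (show (2 : Fin 4) ≠ 0 by decide),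
      kill_X_ne (show (3 : Fin 4) ≠ 0 by decide)] at h0
    have hcz : X 2 * kill 0 p =
        kill 0 c4 * t1 a + kill 0 c5 * t2 a + 0 * t5 a := by
      simp only [t1, t2, t5]
      linear_combination h0
    obtain ⟨A', B', C', hP⟩ := colon_z_core a (kill 0 p) _ _ _ hcz
    exact mem_span4.mpr ⟨g, A', B', C', by linear_combination hg + hP⟩
  · intro hm
    obtain ⟨c0, c1, c2, c3, hrep⟩ := mem_span4.mp hm
    refine mem_span5.mpr ⟨0, c0, 0, c1 * X 2 + c3 * (X 1 - C a * X 3),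
      c2 * X 2 + c3 * (X 3 + C a * X 2), ?_⟩
    simp only [t1, t2, t5] at hrep ⊢
    linear_combination X 2 * hrep

/-- Part 2 : `J : (z²) = (x, T₁, T₂, T₅)`. -/
theorem part2 (a : k) :
    (Ideal.span ({X 0 ^ 2, X 0 * X 2, X 0 * X 3, t1 a, t2 a} :
        Set (MvPolynomial (Fin 4) k))).colon (Ideal.span {X 2 ^ 2} : Ideal (MvPolynomial (Fin 4) k)) =
      Ideal.span {X 0, t1 a, t2 a, t5 a} := by
  ext p
  rw [Ideal.mem_colon_span_singleton]
  constructor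
  · intro hm
    obtain ⟨c1, c2, c3, c4, c5, hrep⟩ := mem_span5.mp hm
    obtain ⟨g, hg⟩ := exists_kill 0 p
    have h0 := congrArg (kill (k := k) 0) hrep
    simp only [t1, t2, map_add, map_sub, map_mul, map_pow, kill_X_self, kill_C,
      kill_X_ne (show (1 : Fin 4) ≠ 0 by decide), kill_X_ne (show (2 : Fin 4) ≠ 0 by decide),
      kill_X_ne (show (3 : Fin 4) ≠ 0 by decide)] at h0
    have hcz : X 2 * (X 2 * kill 0 p) =
        kill 0 c4 * t1 a + kill 0 c5 * t2 a + 0 * t5 a := by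
      simp only [t1, t2, t5]
      linear_combination h0
    obtain ⟨A', B', C', hP⟩ := colon_z_core a (X 2 * kill 0 p) _ _ _ hcz
    obtain ⟨A'', B'', C'', hP2⟩ := colon_z_core a (kill 0 p) _ _ _ hP
    exact mem_span4.mpr ⟨g, A'', B'', C'', by linear_combination hg + hP2⟩
  · intro hm
    obtain ⟨c0, c1, c2, c3, hrep⟩ := mem_span4.mp hm
    refine mem_span5.mpr ⟨0, c0 * X 2, 0, c1 * X 2 ^ 2 + c3 * X 2 * (X 1 - C a * X 3),
      c2 * X 2 ^ 2 + c3 * X 2 * (X 3 + C a * X 2), ?_⟩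
    simp only [t1, t2, t5] at hrep ⊢
    linear_combination X 2 ^ 2 * hrep

noncomputable def onlyY : MvPolynomial (Fin 4) k →ₐ[k] MvPolynomial (Fin 4) k :=
  aeval (fun j => if j = 1 then X 1 else 0)

@[simp] theorem onlyY_X1 : onlyY (k := k) (X 1) = X 1 := by simp [onlyY]

theorem onlyY_X_ne {j : Fin 4} (h : j ≠ 1) : onlyY (k := k) (X j) = 0 := by
  simp [onlyY, h]

@[simp] theorem onlyY_C (c : k) : onlyY (C c) = C c := by simp [onlyY, algebraMap_eq]

theorem comp3_eq_onlyY (f : MvPolynomial (Fin 4) k) :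
    kill 3 (kill 2 (kill 0 f)) = onlyY f := by
  have h : (kill 3).comp ((kill (k := k) 2).comp (kill 0)) = onlyY :=
    algHom_ext fun j => by
      fin_cases j <;>
        simp [AlgHom.comp_apply, kill_X_self, kill_X_ne, onlyY_X_ne, kill_X_ne (show (1 : Fin 4) ≠ 0 by decide),
          kill_X_ne (show (1 : Fin 4) ≠ 2 by decide), kill_X_ne (show (1 : Fin 4) ≠ 3 by decide),
          kill_X_ne (show (2 : Fin 4) ≠ 0 by decide), kill_X_ne (show (3 : Fin 4) ≠ 0 by decide),
          kill_X_ne (show (3 : Fin 4) ≠ 2 by decide)]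
  exact DFunLike.congr_fun h f

/-- Part 3 : `J : (q) = J + (x)`. -/
theorem part3 (a : k) :
    (Ideal.span ({X 0 ^ 2, X 0 * X 2, X 0 * X 3, t1 a, t2 a} :
        Set (MvPolynomial (Fin 4) k))).colon (Ideal.span {X 0 * X 1 - X 2 ^ 2} : Ideal (MvPolynomial (Fin 4) k)) =
      Ideal.span ({X 0 ^ 2, X 0 * X 2, X 0 * X 3, t1 a, t2 a} :
        Set (MvPolynomial (Fin 4) k)) ⊔ Ideal.span {X 0} := by
  ext p
  rw [Ideal.mem_colon_span_singleton]
  constructor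
  · intro hm
    obtain ⟨c1, c2, c3, c4, c5, hrep⟩ := mem_span5.mp hm
    obtain ⟨g, hg⟩ := exists_kill 0 p
    have h0 := congrArg (kill (k := k) 0) hrep
    simp only [t1, t2, map_add, map_sub, map_mul, map_pow, kill_X_self, kill_C,
      kill_X_ne (show (1 : Fin 4) ≠ 0 by decide), kill_X_ne (show (2 : Fin 4) ≠ 0 by decide),
      kill_X_ne (show (3 : Fin 4) ≠ 0 by decide)] at h0
    -- z² · (-p⁰) ∈ (T₁,T₂)
    have hz2 : X 2 * (X 2 * (- kill 0 p)) =
        kill 0 c4 * t1 a + kill 0 c5 * t2 a + 0 * t5 a := by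
      simp only [t1, t2, t5]
      linear_combination h0
    obtain ⟨A1, B1, C1, hP1⟩ := colon_z_core a (X 2 * (- kill 0 p)) _ _ _ hz2
    obtain ⟨A2, B2, C2, hP⟩ := colon_z_core a (- kill 0 p) _ _ _ hP1
    -- x · h₂ ∈ J
    have hE : X 0 * (X 1 * kill 0 p + X 0 * X 1 * g - X 2 ^ 2 * g) =
        p * (X 0 * X 1 - X 2 ^ 2) + (- (kill 0 c4)) * t1 a + (- (kill 0 c5)) * t2 a := by
      simp only [t1, t2] at hz2 ⊢
      linear_combination (-(X 0 * X 1 - X 2 ^ 2)) * hg - hz2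
    have hmem : X 0 * (X 1 * kill 0 p + X 0 * X 1 * g - X 2 ^ 2 * g) ∈
        Ideal.span ({X 0 ^ 2, X 0 * X 2, X 0 * X 3, t1 a, t2 a} :
          Set (MvPolynomial (Fin 4) k)) := by
      rw [hE]
      exact Ideal.add_mem _ (Ideal.add_mem _ hm (Ideal.mul_mem_left _ _ t1_mem))
        (Ideal.mul_mem_left _ _ t2_mem)
    obtain ⟨d1, d2, d3, d4, d5, hrep2⟩ := mem_span5.mp hmem
    obtain ⟨d4', hd4⟩ := exists_kill 0 d4
    obtain ⟨d5', hd5⟩ := exists_kill 0 d5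
    have h02 := congrArg (kill (k := k) 0) hrep2
    simp only [t1, t2, map_add, map_sub, map_mul, map_pow, kill_X_self, kill_C,
      kill_X_ne (show (1 : Fin 4) ≠ 0 by decide), kill_X_ne (show (2 : Fin 4) ≠ 0 by decide),
      kill_X_ne (show (3 : Fin 4) ≠ 0 by decide)] at h02
    -- cancel x
    have hh2 : X 1 * kill 0 p + X 0 * X 1 * g - X 2 ^ 2 * g =
        d1 * X 0 + d2 * X 2 + d3 * X 3 + d4' * t1 a + d5' * t2 a := by
      apply mul_left_cancel₀ (X_ne_zero (R := k) (σ := Fin 4) 0)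
      simp only [t1, t2] at hrep2 ⊢
      linear_combination hrep2 + (X 1 * X 2 + C a ^ 2 * X 2 ^ 2 - C a * X 2 * X 3 - X 3 ^ 2) * hd4
        + (X 1 * X 3 - C a * X 3 ^ 2) * hd5 - h02
    -- apply the evaluation keeping only y
    have hmu := congrArg (onlyY (k := k)) hh2
    simp only [t1, t2, map_add, map_sub, map_mul, map_pow, onlyY_X1, onlyY_C,
      onlyY_X_ne (show (0 : Fin 4) ≠ 1 by decide), onlyY_X_ne (show (2 : Fin 4) ≠ 1 by decide),
      onlyY_X_ne (show (3 : Fin 4) ≠ 1 by decide)] at hmu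
    have hDP : onlyY (kill 0 p) = 0 := by
      rcases mul_eq_zero.mp (show (X 1 : MvPolynomial (Fin 4) k) * onlyY (kill 0 p) = 0 by
        linear_combination hmu) with h' | h'
      · exact absurd h' (X_ne_zero 1)
      · exact h'
    have hmu2 := congrArg (onlyY (k := k)) hP
    simp only [t1, t2, t5, map_add, map_sub, map_mul, map_pow, map_neg, onlyY_X1, onlyY_C,
      onlyY_X_ne (show (0 : Fin 4) ≠ 1 by decide), onlyY_X_ne (show (2 : Fin 4) ≠ 1 by decide),
      onlyY_X_ne (show (3 : Fin 4) ≠ 1 by decide)] at hmu2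
    have hC2 : onlyY C2 = 0 := by
      have : onlyY C2 * X 1 ^ 2 = 0 := by
        rw [hDP] at hmu2
        linear_combination -hmu2
      rcases mul_eq_zero.mp this with h' | h'
      · exact h'
      · exact absurd h' (pow_ne_zero 2 (X_ne_zero 1))
    -- decompose C2
    obtain ⟨e0, he0⟩ := exists_kill 0 C2
    obtain ⟨e1, he1⟩ := exists_kill 2 (kill 0 C2)
    obtain ⟨e2, he2⟩ := exists_kill 3 (kill 2 (kill 0 C2))
    have hC2dec : C2 = X 0 * e0 + X 2 * e1 + X 3 * e2 := by
      have h3 := comp3_eq_onlyY (k := k) C2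
      rw [hC2] at h3
      linear_combination he0 + he1 + he2 + h3
    -- assemble
    rw [Submodule.mem_sup]
    refine ⟨(- A2 - e1 * (X 1 - C a * X 3)) * t1 a
        + (- B2 - e1 * (X 3 + C a * X 2) - e2 * (X 1 + C a ^ 2 * X 2)) * t2 a,
      ?_, X 0 * (g - e0 * t5 a), ?_, ?_⟩
    · exact Ideal.add_mem _ (Ideal.mul_mem_left _ _ t1_mem) (Ideal.mul_mem_left _ _ t2_mem)
    · exact Ideal.mem_span_singleton.mpr ⟨g - e0 * t5 a, rfl⟩
    · simp only [t1, t2, t5] at hP ⊢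
      linear_combination -hg + hP + (X 1 ^ 2 + C a ^ 2 * X 1 * X 2 - C a * X 1 * X 3
        - C a ^ 3 * X 2 * X 3) * hC2dec
  · intro hm
    rw [Submodule.mem_sup] at hm
    obtain ⟨j, hj, r, hr, rfl⟩ := hm
    obtain ⟨s, hs⟩ := Ideal.mem_span_singleton.mp hr
    rw [add_mul]
    refine Ideal.add_mem _ (Ideal.mul_mem_right _ _ hj) ?_
    rw [hs]
    exact mem_span5.mpr ⟨s * X 1, - (s * X 2), 0, 0, 0, by ring⟩

end Stmt10Aux

open Stmt10Aux in
/-- Proposition A.1, case Ib: colon ideal computations. -/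
theorem stmt_10 (k : Type*) [Field k] (a : k) :
    let x : MvPolynomial (Fin 4) k := X 0
    let y : MvPolynomial (Fin 4) k := X 1
    let z : MvPolynomial (Fin 4) k := X 2
    let w : MvPolynomial (Fin 4) k := X 3
    let T₁ := y * z + C a ^ 2 * z ^ 2 - C a * z * w - w ^ 2
    let T₂ := y * w - C a * w ^ 2
    let T₅ := y ^ 2 + C a ^ 2 * y * z - C a * y * w - C a ^ 3 * z * w
    let J : Ideal (MvPolynomial (Fin 4) k) :=
      Ideal.span {x ^ 2, x * z, x * w, T₁, T₂}
    let q := x * y - z ^ 2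
    J.colon (Ideal.span {z}) = Ideal.span {x, T₁, T₂, T₅} ∧
    J.colon (Ideal.span {z ^ 2}) = Ideal.span {x, T₁, T₂, T₅} ∧
    J.colon (Ideal.span {q}) = J ⊔ Ideal.span {x} := by
  intro x y z w T₁ T₂ T₅ J q
  exact ⟨part1 a, part2 a, part3 a⟩
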